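/- Let (A,{·,·,·}) be a generalized pre-Lie algebra of order 3 over a field k. Then the trilinear operation [x,y,z] := {x,y,z} + {y,z,x} + {z,x,y} makes A into a generalized Lie algebra of order 3. -/

import Mathlib

/-- The cyclic sum `○{x,y,z} = {x,y,z} + {y,z,x} + {z,x,y}` of a ternary operation. -/
def cyc3 {A : Type*} [AddCommGroup A] (f : A → A → A → A) : A → A → A → A :=
  fun x y z => f x y z + f y z x + f z x y

/-- A ternary operation is skew-symmetric:
`f(x_{σ(1)}, x_{σ(2)}, x_{σ(3)}) = sgn(σ) f(x₁, x₂, x₃)` for every permutation `σ`. -/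
def Skew3 {A : Type*} [AddCommGroup A] (f : A → A → A → A) : Prop :=
  ∀ (σ : Equiv.Perm (Fin 3)) (x : Fin 3 → A),
    f (x (σ 0)) (x (σ 1)) (x (σ 2)) = (Equiv.Perm.sign σ : ℤ) • f (x 0) (x 1) (x 2)

/-- A generalized Lie algebra of order 3. -/
def GenLie3 {A : Type*} [AddCommGroup A] (f : A → A → A → A) : Prop :=
  Skew3 f ∧
  ∀ x1 x2 x3 x4 x5 : A,
    f (f x1 x2 x3) x4 x5 - f (f x1 x2 x4) x3 x5 + f (f x1 x3 x4) x2 x5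
      - f (f x2 x3 x4) x1 x5 + f (f x1 x2 x5) x3 x4 + f (f x3 x4 x5) x1 x2
      - f (f x1 x3 x5) x2 x4 - f (f x2 x4 x5) x1 x3 + f (f x1 x4 x5) x2 x3
      + f (f x2 x3 x5) x1 x4 = 0

/-- The defining relations of a generalized pre-Lie algebra of order 3. -/
def GenPreLie3 {A : Type*} [AddCommGroup A] (f : A → A → A → A) : Prop :=
  (∀ x1 x2 x3 : A, f x1 x2 x3 = - f x1 x3 x2) ∧
  (∀ x1 x2 x3 x4 x5 : A,
    f (f x1 x2 x3) x4 x5 =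
      f (f x1 x2 x4) x3 x5 - f (f x1 x2 x5) x3 x4 - f (f x1 x3 x4) x2 x5
        + f (f x1 x3 x5) x2 x4 - f (f x1 x4 x5) x2 x3 - f x1 (cyc3 f x2 x3 x4) x5
        + f x1 (cyc3 f x2 x3 x5) x4 - f x1 (cyc3 f x2 x4 x5) x3
        + f x1 (cyc3 f x3 x4 x5) x2)

set_option maxHeartbeats 4000000 in
/-- Let `(A, {·,·,·})` be a generalized pre-Lie algebra of order 3 over a
field `k`. Then `[x,y,z] := {x,y,z} + {y,z,x} + {z,x,y}` makes `A` into a generalized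
Lie algebra of order 3. -/
theorem genPreLie3_cyclic_genLie3 {k A : Type*} [Field k] [AddCommGroup A] [Module k A]
    (f : A →ₗ[k] A →ₗ[k] A →ₗ[k] A)
    (h : GenPreLie3 (fun x y z => f x y z)) :
    GenLie3 (cyc3 (fun x y z => f x y z)) := by
  obtain ⟨h1', h2'⟩ := h
  have h1 : ∀ a b c : A, f a b c = - f a c b := h1'
  refine ⟨?_, ?_⟩
  · intro σ x
    have key : ∀ τ : Equiv.Perm (Fin 3),
        (τ 0 = 0 ∧ τ 1 = 1 ∧ τ 2 = 2 ∧ Equiv.Perm.sign τ = 1) ∨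
        (τ 0 = 0 ∧ τ 1 = 2 ∧ τ 2 = 1 ∧ Equiv.Perm.sign τ = -1) ∨
        (τ 0 = 1 ∧ τ 1 = 0 ∧ τ 2 = 2 ∧ Equiv.Perm.sign τ = -1) ∨
        (τ 0 = 1 ∧ τ 1 = 2 ∧ τ 2 = 0 ∧ Equiv.Perm.sign τ = 1) ∨
        (τ 0 = 2 ∧ τ 1 = 0 ∧ τ 2 = 1 ∧ Equiv.Perm.sign τ = 1) ∨
        (τ 0 = 2 ∧ τ 1 = 1 ∧ τ 2 = 0 ∧ Equiv.Perm.sign τ = -1) := by decide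
    rcases key σ with ⟨ha, hb, hc, hs⟩ | ⟨ha, hb, hc, hs⟩ | ⟨ha, hb, hc, hs⟩ | ⟨ha, hb, hc, hs⟩ |
        ⟨ha, hb, hc, hs⟩ | ⟨ha, hb, hc, hs⟩ <;> rw [ha, hb, hc, hs] <;>
      simp only [cyc3, Units.val_one, Units.val_neg, one_smul, neg_smul] <;>
      first
        | (rw [h1 (x 0) (x 2) (x 1), h1 (x 2) (x 1) (x 0), h1 (x 1) (x 0) (x 2)]; abel)
        | abel
  · intro x1 x2 x3 x4 x5
    have lem2 : ∀ a b c d e : A, f a b (f c d e) = -(f a (f c d e) b) := by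
      intro a b c d e; rw [h1 a b (f c d e)]
    have E1 := h2' x1 x2 x3 x4 x5
    have E2 := h2' x2 x1 x3 x4 x5
    have E3 := h2' x3 x1 x2 x4 x5
    have E4 := h2' x4 x1 x2 x3 x5
    have E5 := h2' x5 x1 x2 x3 x4
    simp only [cyc3, map_add, LinearMap.add_apply] at E1 E2 E3 E4 E5 ⊢
    simp only [lem2]
    have n1 : ∀ s t : A, f (f x2 x3 x1) s t = -(f (f x2 x1 x3) s t) := by
      intro s t; rw [h1 x2 x3 x1]; simp
    have n2 : ∀ s t : A, f (f x2 x4 x1) s t = -(f (f x2 x1 x4) s t) := by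
      intro s t; rw [h1 x2 x4 x1]; simp
    have n3 : ∀ s t : A, f (f x2 x5 x1) s t = -(f (f x2 x1 x5) s t) := by
      intro s t; rw [h1 x2 x5 x1]; simp
    have n4 : ∀ s t : A, f (f x3 x4 x1) s t = -(f (f x3 x1 x4) s t) := by
      intro s t; rw [h1 x3 x4 x1]; simp
    have n5 : ∀ s t : A, f (f x3 x4 x2) s t = -(f (f x3 x2 x4) s t) := by
      intro s t; rw [h1 x3 x4 x2]; simp
    have n6 : ∀ s t : A, f (f x3 x5 x1) s t = -(f (f x3 x1 x5) s t) := by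
      intro s t; rw [h1 x3 x5 x1]; simp
    have n7 : ∀ s t : A, f (f x3 x5 x2) s t = -(f (f x3 x2 x5) s t) := by
      intro s t; rw [h1 x3 x5 x2]; simp
    have n8 : ∀ s t : A, f (f x4 x5 x1) s t = -(f (f x4 x1 x5) s t) := by
      intro s t; rw [h1 x4 x5 x1]; simp
    have n9 : ∀ s t : A, f (f x4 x5 x2) s t = -(f (f x4 x2 x5) s t) := by
      intro s t; rw [h1 x4 x5 x2]; simp
    have n10 : ∀ s t : A, f (f x4 x5 x3) s t = -(f (f x4 x3 x5) s t) := by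
      intro s t; rw [h1 x4 x5 x3]; simp
    have n11 : f x1 (f x3 x4 x2) x5 = -(f x1 (f x3 x2 x4) x5) := by
      rw [h1 x3 x4 x2]; simp
    have n12 : f x1 (f x3 x5 x2) x4 = -(f x1 (f x3 x2 x5) x4) := by
      rw [h1 x3 x5 x2]; simp
    have n13 : f x1 (f x4 x5 x2) x3 = -(f x1 (f x4 x2 x5) x3) := by
      rw [h1 x4 x5 x2]; simp
    have n14 : f x1 (f x4 x5 x3) x2 = -(f x1 (f x4 x3 x5) x2) := by
      rw [h1 x4 x5 x3]; simp
    have n15 : f x2 (f x3 x4 x1) x5 = -(f x2 (f x3 x1 x4) x5) := by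
      rw [h1 x3 x4 x1]; simp
    have n16 : f x2 (f x3 x5 x1) x4 = -(f x2 (f x3 x1 x5) x4) := by
      rw [h1 x3 x5 x1]; simp
    have n17 : f x2 (f x4 x5 x1) x3 = -(f x2 (f x4 x1 x5) x3) := by
      rw [h1 x4 x5 x1]; simp
    have n18 : f x2 (f x4 x5 x3) x1 = -(f x2 (f x4 x3 x5) x1) := by
      rw [h1 x4 x5 x3]; simp
    have n19 : f x3 (f x2 x4 x1) x5 = -(f x3 (f x2 x1 x4) x5) := by
      rw [h1 x2 x4 x1]; simp
    have n20 : f x3 (f x2 x5 x1) x4 = -(f x3 (f x2 x1 x5) x4) := by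
      rw [h1 x2 x5 x1]; simp
    have n21 : f x3 (f x4 x5 x1) x2 = -(f x3 (f x4 x1 x5) x2) := by
      rw [h1 x4 x5 x1]; simp
    have n22 : f x3 (f x4 x5 x2) x1 = -(f x3 (f x4 x2 x5) x1) := by
      rw [h1 x4 x5 x2]; simp
    have n23 : f x4 (f x2 x3 x1) x5 = -(f x4 (f x2 x1 x3) x5) := by
      rw [h1 x2 x3 x1]; simp
    have n24 : f x4 (f x2 x5 x1) x3 = -(f x4 (f x2 x1 x5) x3) := by
      rw [h1 x2 x5 x1]; simp
    have n25 : f x4 (f x3 x5 x1) x2 = -(f x4 (f x3 x1 x5) x2) := by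
      rw [h1 x3 x5 x1]; simp
    have n26 : f x4 (f x3 x5 x2) x1 = -(f x4 (f x3 x2 x5) x1) := by
      rw [h1 x3 x5 x2]; simp
    have n27 : f x5 (f x2 x3 x1) x4 = -(f x5 (f x2 x1 x3) x4) := by
      rw [h1 x2 x3 x1]; simp
    have n28 : f x5 (f x2 x4 x1) x3 = -(f x5 (f x2 x1 x4) x3) := by
      rw [h1 x2 x4 x1]; simp
    have n29 : f x5 (f x3 x4 x1) x2 = -(f x5 (f x3 x1 x4) x2) := by
      rw [h1 x3 x4 x1]; simp
    have n30 : f x5 (f x3 x4 x2) x1 = -(f x5 (f x3 x2 x4) x1) := by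
      rw [h1 x3 x4 x2]; simp
    simp only [n1, n2, n3, n4, n5, n6, n7, n8, n9, n10, n11, n12, n13, n14, n15, n16, n17, n18, n19, n20, n21, n22, n23, n24, n25, n26, n27, n28, n29, n30] at E1 E2 E3 E4 E5 ⊢
    rw [E1, E2, E3, E4, E5]
    abel
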